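/- Let Q ⊆ 2^ω be measurable, σ a string, ε > 0, and Q^ε_σ = {X ∈ Q ∩ [σ] : ∀ n ≥ |σ|, μ_{X↾n}(Q) ≥ ε}. For any string τ ⪰ σ with [τ] ∩ Q^ε_σ ≠ ∅, we have μ_τ(Q^ε_σ) > μ_τ(Q) − ε. -/

import Mathlib

open MeasureTheory Filter
open scoped ENNReal

/-- The cylinder of infinite binary sequences extending the finite string `τ`. -/
def cyl (τ : List Bool) : Set (ℕ → Bool) := {X | ∀ i : Fin τ.length, X i = τ.get i}

/-- Relative measure `μ_τ(P) = μ(P ∩ [τ]) / μ([τ])`. -/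
noncomputable def relMeas (μ : Measure (ℕ → Bool)) (τ : List Bool)
    (P : Set (ℕ → Bool)) : ℝ≥0∞ := μ (P ∩ cyl τ) / μ (cyl τ)

/-- The length-`n` prefix of an infinite binary sequence. -/
def pre (X : ℕ → Bool) (n : ℕ) : List Bool := List.ofFn fun i : Fin n => X i

lemma pre_length (X : ℕ → Bool) (n : ℕ) : (pre X n).length = n := by simp [pre]

lemma mem_cyl_pre (X : ℕ → Bool) (n : ℕ) : X ∈ cyl (pre X n) := by
  intro i
  show X i = (pre X n).get i
  rw [List.get_eq_getElem]
  simp [pre]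

lemma pre_eq_of_mem_cyl {X : ℕ → Bool} {τ : List Bool} (h : X ∈ cyl τ) :
    pre X τ.length = τ := by
  apply List.ext_getElem (by simp [pre])
  intro i h1 h2
  simpa [pre] using h ⟨i, h2⟩

lemma pre_prefix (X : ℕ → Bool) {m n : ℕ} (h : m ≤ n) : pre X m <+: pre X n := by
  rw [List.prefix_iff_eq_take]
  apply List.ext_getElem (by simp [pre, Nat.min_eq_left h])
  intro i h1 h2
  simp [pre]

lemma pre_take {X : ℕ → Bool} {τ : List Bool} (h : X ∈ cyl τ) {n : ℕ}
    (hn : n ≤ τ.length) : pre X n = τ.take n := by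
  have h1 := pre_prefix X hn
  rw [pre_eq_of_mem_cyl h] at h1
  rw [List.prefix_iff_eq_take.1 h1, pre_length]

lemma cyl_anti {ρ ρ' : List Bool} (h : ρ <+: ρ') : cyl ρ' ⊆ cyl ρ := by
  intro X hX i
  have hi : (i : ℕ) < ρ'.length := lt_of_lt_of_le i.2 h.length_le
  have h2 := hX ⟨i, hi⟩
  simp only [List.get_eq_getElem] at h2 ⊢
  rw [h2, h.getElem i.2]

lemma cyl_measurable (τ : List Bool) : MeasurableSet (cyl τ) := by
  have : cyl τ = ⋂ i : Fin τ.length, (fun X : ℕ → Bool => X i) ⁻¹' {τ.get i} := by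
    ext X; simp [cyl]
  rw [this]
  exact MeasurableSet.iInter fun i => measurable_pi_apply _ (measurableSet_singleton _)

theorem stmt4 (μ : Measure (ℕ → Bool))
    (hμ : ∀ τ : List Bool, μ (cyl τ) = (2 : ℝ≥0∞)⁻¹ ^ τ.length)
    (Q : Set (ℕ → Bool)) (hQ : MeasurableSet Q) (σ : List Bool)
    (ε : ℝ≥0∞) (hε : 0 < ε)
    (Qes : Set (ℕ → Bool))
    (hQes : Qes = {X ∈ Q ∩ cyl σ | ∀ n ≥ σ.length, ε ≤ relMeas μ (pre X n) Q})
    (τ : List Bool) (hτ : σ <+: τ) (hne : (cyl τ ∩ Qes).Nonempty) :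
    relMeas μ τ Q - ε < relMeas μ τ Qes := by
  classical
  obtain ⟨X₀, hX₀τ, hX₀⟩ := hne
  have hX₀' := hQes ▸ hX₀
  obtain ⟨⟨hX₀Q, hX₀σ⟩, hX₀all⟩ := hX₀'
  -- basic measure facts on cylinders
  have hc0 : ∀ ρ : List Bool, μ (cyl ρ) ≠ 0 := by
    intro ρ; rw [hμ]
    exact pow_ne_zero _ (ENNReal.inv_ne_zero.2 (by simp))
  have hcT : ∀ ρ : List Bool, μ (cyl ρ) ≠ ⊤ := by
    intro ρ; rw [hμ]
    exact ENNReal.pow_ne_top (ENNReal.inv_ne_top.2 (by simp))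
  set m := μ (cyl τ) with hm
  have hm0 : m ≠ 0 := hc0 τ
  have hmT : m ≠ ⊤ := hcT τ
  have hστ : σ.length ≤ τ.length := hτ.length_le
  have hpreτ : pre X₀ τ.length = τ := pre_eq_of_mem_cyl hX₀τ
  have hετ : ε ≤ relMeas μ τ Q := by
    have := hX₀all τ.length hστ
    rwa [hpreτ] at this
  have hQτfin : relMeas μ τ Q ≠ ⊤ := by
    refine (ENNReal.div_lt_top ?_ hm0).ne
    exact ne_top_of_le_ne_top hmT (measure_mono Set.inter_subset_right)
  have hεT : ε ≠ ⊤ := ne_top_of_le_ne_top hQτfin hετ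
  -- the family of "bad" extensions of τ and its minimal elements
  set A : Set (List Bool) := {ρ | τ <+: ρ ∧ relMeas μ ρ Q < ε} with hA
  set M : Set (List Bool) := {ρ ∈ A | ∀ ρ', ρ' <+: ρ → ρ' ≠ ρ → ρ' ∉ A} with hM
  have hmin : ∀ ρ ∈ A, ∃ ρ' ∈ M, ρ' <+: ρ := by
    intro ρ hρ
    have hP : ∃ k, ρ.take k ∈ A := ⟨ρ.length, by simpa using hρ⟩
    refine ⟨ρ.take (Nat.find hP), ⟨Nat.find_spec hP, ?_⟩, List.take_prefix _ _⟩
    intro ρ' hpre hneq hρ'A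
    have hlen : ρ'.length < (ρ.take (Nat.find hP)).length :=
      lt_of_le_of_ne hpre.length_le fun h => hneq (hpre.eq_of_length h)
    have hlen2 : ρ'.length < Nat.find hP :=
      lt_of_lt_of_le hlen (by simp [List.length_take])
    have h1 : ρ' = ρ.take ρ'.length := by
      conv_lhs => rw [List.prefix_iff_eq_take.1 hpre]
      rw [List.take_take, Nat.min_eq_left hlen2.le]
    exact Nat.find_min hP hlen2 (h1 ▸ hρ'A)
  have hdisj : M.PairwiseDisjoint cyl := by
    intro ρ₁ h1 ρ₂ h2 hne12
    simp only [Function.onFun]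
    rw [Set.disjoint_left]
    intro X hXa hXb
    rcases le_total ρ₁.length ρ₂.length with h | h
    · have hp : ρ₁ <+: ρ₂ := by
        rw [← pre_eq_of_mem_cyl hXa, ← pre_eq_of_mem_cyl hXb]
        exact pre_prefix X h
      exact h2.2 ρ₁ hp hne12 h1.1
    · have hp : ρ₂ <+: ρ₁ := by
        rw [← pre_eq_of_mem_cyl hXa, ← pre_eq_of_mem_cyl hXb]
        exact pre_prefix X h
      exact h1.2 ρ₂ hp (Ne.symm hne12) h2.1
  set U : Set (ℕ → Bool) := ⋃ ρ ∈ M, cyl ρ with hU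
  have hUsub : U ⊆ cyl τ := Set.iUnion₂_subset fun ρ hρ => cyl_anti hρ.1.1
  have hBU : ∀ X ∈ Q ∩ cyl τ, X ∉ Qes → X ∈ U := by
    rintro X ⟨hXQ, hXτ⟩ hXn
    have hXσ : X ∈ cyl σ := cyl_anti hτ hXτ
    have hnot : ¬ ∀ n ≥ σ.length, ε ≤ relMeas μ (pre X n) Q := by
      intro hall
      exact hXn (hQes ▸ ⟨⟨hXQ, hXσ⟩, hall⟩)
    push_neg at hnot
    obtain ⟨n, hn, hlt⟩ := hnot
    have hnτ : τ.length ≤ n := by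
      by_contra hcon
      push_neg at hcon
      have : pre X n = pre X₀ n := by
        rw [pre_take hXτ hcon.le, pre_take hX₀τ hcon.le]
      rw [this] at hlt
      exact absurd (hX₀all n hn) (not_le.2 hlt)
    have hτpre : τ <+: pre X n := by
      rw [← pre_eq_of_mem_cyl hXτ]
      exact pre_prefix X hnτ
    obtain ⟨ρ', hρ'M, hρ'pre⟩ := hmin (pre X n) ⟨hτpre, hlt⟩
    exact Set.mem_biUnion hρ'M (cyl_anti hρ'pre (mem_cyl_pre X n))
  have hsplit : Q ∩ cyl τ ⊆ (Qes ∩ cyl τ) ∪ (Q ∩ U) := by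
    intro X hX
    by_cases hXQes : X ∈ Qes
    · exact Or.inl ⟨hXQes, hX.2⟩
    · exact Or.inr ⟨hX.1, hBU X hX hXQes⟩
  have hQesfin : μ (Qes ∩ cyl τ) ≠ ⊤ :=
    ne_top_of_le_ne_top hmT (measure_mono Set.inter_subset_right)
  -- key inequality
  have key : μ (Q ∩ cyl τ) < μ (Qes ∩ cyl τ) + ε * m := by
    rcases Set.eq_empty_or_nonempty M with hMe | ⟨ρ₀, hρ₀⟩
    · have hUe : U = ∅ := by simp [hU, hMe]
      have hsub : Q ∩ cyl τ ⊆ Qes ∩ cyl τ := by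
        intro X hX
        rcases hsplit hX with h | h
        · exact h
        · exact absurd h.2 (hUe ▸ Set.notMem_empty X)
      exact lt_of_le_of_lt (measure_mono hsub)
        (ENNReal.lt_add_right hQesfin (mul_ne_zero hε.ne' hm0))
    · have hcount : M.Countable := Set.to_countable M
      have hUeq : μ U = ∑' ρ : M, μ (cyl ↑ρ) :=
        measure_biUnion hcount hdisj fun ρ _ => cyl_measurable ρ
      have hsumfin : ∑' ρ : M, μ (Q ∩ cyl ↑ρ) ≠ ⊤ := by
        refine ne_top_of_le_ne_top ?_ (ENNReal.tsum_le_tsum fun ρ =>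
          measure_mono Set.inter_subset_right)
        rw [← hUeq]
        exact ne_top_of_le_ne_top hmT (measure_mono hUsub)
      have hstrict : ∀ ρ : M, μ (Q ∩ cyl ↑ρ) < ε * μ (cyl ↑ρ) := by
        intro ρ
        have hρA : (ρ : List Bool) ∈ A := ρ.2.1
        have := hρA.2
        rwa [relMeas, ENNReal.div_lt_iff (Or.inl (hc0 ρ)) (Or.inl (hcT ρ))] at this
      have hQU : μ (Q ∩ U) < ε * m := by
        have h1 : μ (Q ∩ U) ≤ ∑' ρ : M, μ (Q ∩ cyl ↑ρ) := by
          have : Q ∩ U = ⋃ ρ ∈ M, Q ∩ cyl ρ := by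
            simp [hU, Set.inter_iUnion]
          rw [this]
          exact measure_biUnion_le μ hcount _
        have h2 : ∑' ρ : M, μ (Q ∩ cyl ↑ρ) < ∑' ρ : M, ε * μ (cyl ↑ρ) :=
          ENNReal.tsum_lt_tsum (i := ⟨ρ₀, hρ₀⟩) hsumfin
            (fun ρ => (hstrict ρ).le) (hstrict ⟨ρ₀, hρ₀⟩)
        have h3 : ∑' ρ : M, ε * μ (cyl ↑ρ) ≤ ε * m := by
          rw [ENNReal.tsum_mul_left, ← hUeq]
          exact mul_le_mul_right (measure_mono hUsub) ε
        exact lt_of_le_of_lt h1 (lt_of_lt_of_le h2 h3)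
      calc μ (Q ∩ cyl τ) ≤ μ ((Qes ∩ cyl τ) ∪ (Q ∩ U)) := measure_mono hsplit
        _ ≤ μ (Qes ∩ cyl τ) + μ (Q ∩ U) := measure_union_le _ _
        _ < μ (Qes ∩ cyl τ) + ε * m := ENNReal.add_lt_add_left hQesfin hQU
  have main : relMeas μ τ Q < relMeas μ τ Qes + ε := by
    rw [relMeas, relMeas, ← hm,
      ENNReal.div_lt_iff (Or.inl hm0) (Or.inl hmT), add_mul,
      ENNReal.div_mul_cancel hm0 hmT]
    exact key
  exact (ENNReal.sub_lt_iff_lt_right hεT hετ).2 main
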